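/- Let s be a real number with 1/2 < s < 1. Then the supremum of −log(x⁻¹ − 1)/(y − x) over all pairs (x, y) with 1/2 ≤ x ≤ s and 1 − x < y ≤ 1/2 equals −2. -/

import Mathlib

open Real Set Filter Topology

lemma key_ineq (x : ℝ) (hx : 1/2 ≤ x) (hx1 : x < 1) :
    2*(2*x - 1) ≤ Real.log x - Real.log (1 - x) := by
  set g : ℝ → ℝ := fun t => Real.log t - Real.log (1 - t) - 4*t with hg
  have hmono : MonotoneOn g (Set.Ico (1/2:ℝ) 1) := by
    have hderiv : ∀ t ∈ interior (Set.Ico (1/2:ℝ) 1),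
        HasDerivAt g (t⁻¹ + (1-t)⁻¹ - 4) t := by
      intro t ht
      rw [interior_Ico] at ht
      obtain ⟨ht1, ht2⟩ := ht
      have ht0 : t ≠ 0 := by intro h; rw [h] at ht1; norm_num at ht1
      have ht10 : 1 - t ≠ 0 := by intro h; linarith [sub_eq_zero.mp h]
      have h1 : HasDerivAt (fun t : ℝ => Real.log t) t⁻¹ t := Real.hasDerivAt_log ht0
      have h2 : HasDerivAt (fun u : ℝ => Real.log (1 - u)) (-(1-t)⁻¹) t := by
        have hc : HasDerivAt (fun u : ℝ => 1 - u) (-1) t := by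
          simpa using (hasDerivAt_id t).const_sub 1
        have := (Real.hasDerivAt_log ht10).comp t hc
        have e : (-(1-t)⁻¹) = (1-t)⁻¹ * (-1) := by ring
        rw [e]; exact this
      have h3 : HasDerivAt (fun u : ℝ => 4*u) 4 t := by
        simpa using (hasDerivAt_id t).const_mul 4
      have := (h1.sub h2).sub h3
      have e : t⁻¹ + (1 - t)⁻¹ - 4 = t⁻¹ - -(1 - t)⁻¹ - 4 := by ring
      rw [e]; exact this
    apply monotoneOn_of_deriv_nonneg (convex_Ico _ _)
    · intro t ht
      obtain ⟨ht1, ht2⟩ := ht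
      have ht0 : t ≠ 0 := by intro h; rw [h] at ht1; norm_num at ht1
      have ht10 : 1 - t ≠ 0 := by intro h; linarith [sub_eq_zero.mp h]
      have c1 : ContinuousAt (fun u : ℝ => Real.log u) t := Real.continuousAt_log ht0
      have c2 : ContinuousAt (fun u : ℝ => Real.log (1 - u)) t :=
        (Real.continuousAt_log ht10).comp ((continuous_const.sub continuous_id).continuousAt)
      exact ((c1.sub c2).sub (by fun_prop)).continuousWithinAt
    · intro t ht
      exact (hderiv t ht).differentiableAt.differentiableWithinAt
    · intro t ht
      rw [(hderiv t ht).deriv]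
      rw [interior_Ico] at ht
      obtain ⟨ht1, ht2⟩ := ht
      have ht0 : (0:ℝ) < t := by linarith
      have ht10 : (0:ℝ) < 1 - t := by linarith
      have h4 : (4:ℝ) ≤ t⁻¹ + (1-t)⁻¹ := by
        rw [inv_eq_one_div, inv_eq_one_div, div_add_div _ _ (ne_of_gt ht0) (ne_of_gt ht10),
          le_div_iff₀ (by positivity)]
        nlinarith [sq_nonneg (2*t - 1)]
      linarith
  have h12 : g (1/2) ≤ g x := hmono ⟨le_refl _, by norm_num⟩ ⟨hx, hx1⟩ hx
  have he : (1:ℝ) - 1/2 = 1/2 := by norm_num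
  simp only [g, he] at h12
  linarith

lemma tendsto_ratio :
    Filter.Tendsto (fun t : ℝ => (Real.log (1/2 + t) - Real.log (1/2 - t)) / (t^2 - 2*t))
      (nhdsWithin 0 (Set.Ioi 0)) (nhds (-2)) := by
  have hf : HasDerivAt (fun t : ℝ => Real.log (1/2 + t) - Real.log (1/2 - t)) 4 0 := by
    have h1 : HasDerivAt (fun t : ℝ => Real.log (1/2 + t)) 2 0 := by
      have hc : HasDerivAt (fun t : ℝ => 1/2 + t) 1 0 := (hasDerivAt_id (0:ℝ)).const_add (1/2)
      have h := (Real.hasDerivAt_log (by norm_num : (1/2:ℝ) + 0 ≠ 0)).comp 0 hc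
      have he : ((1/2 + (0:ℝ))⁻¹ * 1) = 2 := by norm_num
      rw [he] at h
      exact h
    have h2 : HasDerivAt (fun t : ℝ => Real.log (1/2 - t)) (-2) 0 := by
      have hc : HasDerivAt (fun t : ℝ => 1/2 - t) (-1) 0 := (hasDerivAt_id (0:ℝ)).const_sub (1/2)
      have h := (Real.hasDerivAt_log (by norm_num : (1/2:ℝ) - 0 ≠ 0)).comp 0 hc
      have he : ((1/2 - (0:ℝ))⁻¹ * (-1)) = -2 := by norm_num
      rw [he] at h
      exact h
    have h := h1.sub h2
    have he : (2:ℝ) - (-2) = 4 := by norm_num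
    rw [he] at h
    exact h
  have hslope : Filter.Tendsto
      (fun t : ℝ => (Real.log (1/2 + t) - Real.log (1/2 - t)) / t)
      (nhdsWithin 0 {(0:ℝ)}ᶜ) (nhds 4) := by
    have h := hasDerivAt_iff_tendsto_slope.mp hf
    rw [show slope (fun t : ℝ => Real.log (1/2 + t) - Real.log (1/2 - t)) 0
        = fun t => (Real.log (1/2 + t) - Real.log (1/2 - t)) / t from
      funext fun t => by rw [slope_def_field]; simp] at h
    exact h
  have hinv : Filter.Tendsto (fun t : ℝ => (t - 2)⁻¹) (nhdsWithin 0 {(0:ℝ)}ᶜ)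
      (nhds (-2)⁻¹) := by
    apply Filter.Tendsto.inv₀
    · have h : Filter.Tendsto (fun t : ℝ => t - 2) (nhds 0) (nhds (0 - 2)) :=
        (continuous_id.sub continuous_const).tendsto 0
      have he : (0:ℝ) - 2 = -2 := by norm_num
      rw [he] at h
      exact h.mono_left nhdsWithin_le_nhds
    · norm_num
  have hmul := hslope.mul hinv
  have he4 : (4:ℝ) * (-2)⁻¹ = -2 := by norm_num
  rw [he4] at hmul
  have heq : ∀ t : ℝ,
      (Real.log (1/2 + t) - Real.log (1/2 - t)) / t * (t - 2)⁻¹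
      = (Real.log (1/2 + t) - Real.log (1/2 - t)) / (t^2 - 2*t) := by
    intro t
    rw [← div_eq_mul_inv, div_div]
    congr 1
    ring
  have hfinal : Filter.Tendsto
      (fun t : ℝ => (Real.log (1/2 + t) - Real.log (1/2 - t)) / (t^2 - 2*t))
      (nhdsWithin 0 {(0:ℝ)}ᶜ) (nhds (-2)) := by
    apply hmul.congr
    exact heq
  exact hfinal.mono_left (nhdsWithin_mono 0 (fun t ht => ne_of_gt ht))

theorem sup_region_plus_eq_neg_two (s : ℝ) (hs : 1 / 2 < s) (hs1 : s < 1) :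
    sSup {r : ℝ | ∃ x y : ℝ, 1 / 2 ≤ x ∧ x ≤ s ∧ 1 - x < y ∧ y ≤ 1 / 2 ∧
      r = -Real.log (x⁻¹ - 1) / (y - x)} = -2 := by
  set S := {r : ℝ | ∃ x y : ℝ, 1 / 2 ≤ x ∧ x ≤ s ∧ 1 - x < y ∧ y ≤ 1 / 2 ∧
      r = -Real.log (x⁻¹ - 1) / (y - x)} with hS
  -- upper bound
  have hub : ∀ r ∈ S, r ≤ -2 := by
    rintro r ⟨x, y, hx1, hxs, hy1, hy2, hr⟩
    have hx12 : 1/2 < x := by linarith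
    have hx1' : x < 1 := lt_of_le_of_lt hxs hs1
    have hx0 : (0:ℝ) < x := by linarith
    have h1x0 : (0:ℝ) < 1 - x := by linarith
    have hyx : y - x < 0 := by linarith
    have hN : -Real.log (x⁻¹ - 1) = Real.log x - Real.log (1 - x) := by
      have : x⁻¹ - 1 = (1 - x) / x := by field_simp
      rw [this, Real.log_div (ne_of_gt h1x0) (ne_of_gt hx0)]
      ring
    have hkey := key_ineq x (le_of_lt hx12) hx1'
    rw [hr, hN, div_le_iff_of_neg hyx]
    nlinarith
  have hBdd : BddAbove S := ⟨-2, hub⟩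
  -- nonempty
  have hne : S.Nonempty := by
    refine ⟨-Real.log (((1/2 + s)/2)⁻¹ - 1) / (1/2 - (1/2 + s)/2),
      (1/2 + s)/2, 1/2, by linarith, by linarith, by linarith, le_refl _, rfl⟩
  refine le_antisymm (csSup_le hne hub) ?_
  -- lower bound via sequence
  have hδ : (0:ℝ) < min (s - 1/2) 1 := by
    apply lt_min; linarith; norm_num
  have hmem : ∀ᶠ t in nhdsWithin (0:ℝ) (Set.Ioi 0),
      (Real.log (1/2 + t) - Real.log (1/2 - t)) / (t^2 - 2*t) ∈ S := by
    filter_upwards [Ioo_mem_nhdsGT_of_mem (Set.mem_Ico.mpr ⟨le_refl 0, hδ⟩)] with t ht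
    obtain ⟨ht0, htδ⟩ := ht
    have hts : t < s - 1/2 := lt_of_lt_of_le htδ (min_le_left _ _)
    have ht1 : t < 1 := lt_of_lt_of_le htδ (min_le_right _ _)
    refine ⟨1/2 + t, 1/2 - t + t^2, by linarith, by linarith, by nlinarith, by nlinarith, ?_⟩
    have hx0 : (0:ℝ) < 1/2 + t := by linarith
    have h1x0 : (0:ℝ) < 1/2 - t := by nlinarith
    have h1 : (1/2 + t)⁻¹ - 1 = (1/2 - t) / (1/2 + t) := by field_simp; ring
    have h2 : -Real.log ((1/2 + t)⁻¹ - 1) = Real.log (1/2 + t) - Real.log (1/2 - t) := by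
      rw [h1, Real.log_div (ne_of_gt h1x0) (ne_of_gt hx0)]; ring
    rw [h2]
    congr 1
    ring
  have hle : ∀ᶠ t in nhdsWithin (0:ℝ) (Set.Ioi 0),
      (Real.log (1/2 + t) - Real.log (1/2 - t)) / (t^2 - 2*t) ≤ sSup S := by
    filter_upwards [hmem] with t ht
    exact le_csSup hBdd ht
  exact le_of_tendsto tendsto_ratio hle
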